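/- The Milnor number of the Brieskorn-Pham singularity f = x_1^{p_1} + ... + x_n^{p_n} equals (p_1 - 1)(p_2 - 1)···(p_n - 1); that is, the dimension over ℂ of the Jacobian ring ℂ[x_1,...,x_n]/(∂f/∂x_1, ..., ∂f/∂x_n) is ∏_{k=1}^n (p_k - 1). -/

import Mathlib

open MvPolynomial

private lemma coeff_vanish {n : ℕ} (m : Fin n → ℕ) (g : MvPolynomial (Fin n) ℂ)
    (hg : g ∈ Ideal.span (Set.range fun i : Fin n => (X i : MvPolynomial (Fin n) ℂ) ^ m i)) :
    ∀ d : Fin n →₀ ℕ, (∀ i, d i < m i) → coeff d g = 0 := by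
  refine Submodule.span_induction ?_ ?_ ?_ ?_ hg
  · rintro x ⟨i, rfl⟩ d hd
    show coeff d (X i ^ m i) = 0
    rw [X_pow_eq_monomial, coeff_monomial, if_neg]
    intro h
    have := hd i
    rw [← h, Finsupp.single_eq_same] at this
    omega
  · intro d hd; simp
  · intro x y _ _ hx hy d hd; simp [hx d hd, hy d hd]
  · intro r x _ hx d hd
    rw [smul_eq_mul, coeff_mul]
    apply Finset.sum_eq_zero
    rintro ⟨a, b⟩ hab
    have hb : ∀ i, b i < m i := by
      intro i
      have h := (Finset.HasAntidiagonal.mem_antidiagonal).mp hab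
      have : a i + b i = d i := by rw [← h]; simp
      have := hd i; omega
    simp [hx b hb]

private lemma finrank_quot {n : ℕ} (m : Fin n → ℕ) :
    Module.finrank ℂ
      (MvPolynomial (Fin n) ℂ ⧸
        Ideal.span (Set.range fun i : Fin n => (X i : MvPolynomial (Fin n) ℂ) ^ m i)) =
      ∏ i, m i := by
  classical
  set I := Ideal.span (Set.range fun i : Fin n => (X i : MvPolynomial (Fin n) ℂ) ^ m i) with hI
  -- index type
  let D := (i : Fin n) → Fin (m i)
  let tf : D → (Fin n →₀ ℕ) := fun d => Finsupp.equivFunOnFinite.symm fun i => (d i : ℕ)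
  have tf_apply : ∀ (d : D) (i : Fin n), tf d i = d i := fun d i => rfl
  have tf_inj : Function.Injective tf := by
    intro a b h
    funext i
    have := congrArg (fun g => g i) h
    simpa [tf_apply, Fin.ext_iff] using this
  let fam : D → (MvPolynomial (Fin n) ℂ ⧸ I) :=
    fun d => Ideal.Quotient.mkₐ ℂ I (monomial (tf d) 1)
  have hspan : ⊤ ≤ Submodule.span ℂ (Set.range fam) := by
    rintro x -
    obtain ⟨g, rfl⟩ := Ideal.Quotient.mkₐ_surjective ℂ I x
    -- write g as sum of monomials
    rw [show g = ∑ d ∈ g.support, monomial d (coeff d g) from (support_sum_monomial_coeff g).symm]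
    rw [map_sum]
    apply Submodule.sum_mem
    intro d _
    by_cases hd : ∀ i, d i < m i
    · have : monomial d (coeff d g) = coeff d g • monomial d (1 : ℂ) := by
        rw [smul_monomial, smul_eq_mul, mul_one]
      rw [this, map_smul]
      apply Submodule.smul_mem
      apply Submodule.subset_span
      refine ⟨fun i => ⟨d i, hd i⟩, ?_⟩
      have htfd : tf (fun i => ⟨d i, hd i⟩) = d := by
        ext i; simp [tf_apply]
      simp only [fam, htfd]
    · push_neg at hd
      obtain ⟨i, hi⟩ := hd
      have hmem : monomial d (coeff d g) ∈ I := by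
        have hle : Finsupp.single i (m i) ≤ d := by
          rw [Finsupp.single_le_iff]; exact hi
        have : monomial d (coeff d g) =
            monomial (d - Finsupp.single i (m i)) (coeff d g) * X i ^ m i := by
          rw [X_pow_eq_monomial, monomial_mul, mul_one, tsub_add_cancel_of_le hle]
        rw [this]
        exact Ideal.mul_mem_left I _ (Ideal.subset_span ⟨i, rfl⟩)
      rw [Ideal.Quotient.mkₐ_eq_mk, Ideal.Quotient.eq_zero_iff_mem.2 hmem]
      exact Submodule.zero_mem _
  have hli : LinearIndependent ℂ fam := by
    rw [Fintype.linearIndependent_iff]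
    intro c hc e
    have hmem : (∑ d : D, c d • monomial (tf d) (1 : ℂ)) ∈ I := by
      rw [← Ideal.Quotient.eq_zero_iff_mem]
      change (Ideal.Quotient.mkₐ ℂ I) (∑ d : D, c d • monomial (tf d) (1 : ℂ)) = 0
      rw [map_sum]
      simp only [map_smul]
      exact hc
    have := coeff_vanish m _ hmem (tf e) (fun i => by rw [tf_apply]; exact (e i).isLt)
    rw [coeff_sum] at this
    rw [← this]
    rw [Finset.sum_eq_single e]
    · simp
    · intro d _ hne
      rw [coeff_smul, coeff_monomial, if_neg (fun h => hne (tf_inj h)), smul_zero]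
    · intro h; exact absurd (Finset.mem_univ e) h
  let b : Module.Basis D ℂ (MvPolynomial (Fin n) ℂ ⧸ I) := Module.Basis.mk hli hspan
  rw [Module.finrank_eq_card_basis b]
  simp [D, Fintype.card_pi]

/-- The Milnor number of the Brieskorn-Pham singularity
`f = x_1^{p_1} + ... + x_n^{p_n}` equals `(p_1 - 1) ⋯ (p_n - 1)`: the Jacobian ring
`ℂ[x_1, ..., x_n]/(∂f/∂x_1, ..., ∂f/∂x_n)` has dimension `∏ (p_k - 1)` over `ℂ`. -/
theorem stmt10 (n : ℕ) (p : Fin n → ℕ) (hp : ∀ i, 2 ≤ p i)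
    (f : MvPolynomial (Fin n) ℂ) (hf : f = ∑ i, X i ^ p i) :
    Module.finrank ℂ
      (MvPolynomial (Fin n) ℂ ⧸
        Ideal.span (Set.range fun i : Fin n => pderiv i f)) =
      ∏ i, (p i - 1) := by
  classical
  have hpd : ∀ i, pderiv i f = C ((p i : ℂ)) * X i ^ (p i - 1) := by
    intro i
    rw [hf, map_sum, Finset.sum_eq_single i]
    · rw [pderiv_pow, pderiv_X_self, mul_one]
      simp
    · intro j _ hne
      rw [pderiv_pow, pderiv_X_of_ne hne, mul_zero]
    · intro h; exact absurd (Finset.mem_univ i) h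
  have hspan : Ideal.span (Set.range fun i : Fin n => pderiv i f) =
      Ideal.span (Set.range fun i : Fin n => (X i : MvPolynomial (Fin n) ℂ) ^ (p i - 1)) := by
    apply le_antisymm <;> rw [Ideal.span_le] <;> rintro x ⟨i, rfl⟩
    · show pderiv i f ∈ _
      rw [hpd i]
      exact Ideal.mul_mem_left _ _ (Ideal.subset_span ⟨i, rfl⟩)
    · have hne : ((p i : ℂ)) ≠ 0 := by
        have := hp i
        exact_mod_cast Nat.cast_ne_zero.2 (by omega)
      have : (X i : MvPolynomial (Fin n) ℂ) ^ (p i - 1) =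
          C ((p i : ℂ))⁻¹ * pderiv i f := by
        rw [hpd i, ← mul_assoc, ← map_mul, inv_mul_cancel₀ hne, map_one, one_mul]
      show (X i : MvPolynomial (Fin n) ℂ) ^ (p i - 1) ∈ _
      rw [this]
      exact Ideal.mul_mem_left _ _ (Ideal.subset_span ⟨i, rfl⟩)
  rw [hspan, finrank_quot]
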